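/- Let G be a group, h ∈ G, with maps i^E : Z_h^{•+1} → G^{•+1} (inclusion) and p^E : G^{•+1} → Z_h^{•+1} applying p_h coordinatewise, extended linearly to the complexes E_•(G), E_•(Z_h) with boundary ∂(g_0,...,g_n) = (g_1,...,g_n) + Σ_{k=1}^n (-1)^k (g_0,...,ĝ_k,...,g_n). Define D_0(g_0) = (g_0 s(Z_h·g_0)⁻¹, g_0) and inductively D_n(g_0,...,g_n) = (g_0, (id − i^E p^E − D_{n−1}∂_n)(g_0,...,g_n)) (prepending g_0 to each tuple of the chain). Then id − i^E p^E = D_{n−1}∂_n + ∂_{n+1}D_n on E_n(G) for all n ≥ 1, and (id − i^E p^E)(g_0) = ∂_1 D_0(g_0) on E_0(G). -/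

import Mathlib

/-- The simplicial boundary `∂(g_0,...,g_n) = Σ_{k=0}^n (-1)^k (g_0,...,ĝ_k,...,g_n)`
on a basis tuple of `E_n(G)`. -/
noncomputable def dS {G : Type*} [Group G] (l : List G) : List G →₀ ℂ :=
  ∑ k ∈ Finset.range l.length, ((-1 : ℂ) ^ k) • Finsupp.single (l.eraseIdx k) 1

/-- The simplicial boundary, extended linearly. -/
noncomputable def DS {G : Type*} [Group G] : (List G →₀ ℂ) →ₗ[ℂ] (List G →₀ ℂ) :=
  Finsupp.lift (List G →₀ ℂ) ℂ (List G) dS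

/-- The chain homotopies `D_n`: `D_0(g_0) = (p(g_0), g_0)` and inductively
`D_n(g_0,...,g_n) = (g_0, (id − i^E p^E − D_{n−1}∂)(g_0,...,g_n))`, where prepending `g_0`
is applied linearly. -/
noncomputable def DD {G : Type*} [Group G] (p : G → G) :
    ℕ → (List G →₀ ℂ) →ₗ[ℂ] (List G →₀ ℂ)
  | 0 => Finsupp.lift (List G →₀ ℂ) ℂ (List G)
      (fun l => Finsupp.single (p (l.headD 1) :: l) 1)
  | (n + 1) => Finsupp.lift (List G →₀ ℂ) ℂ (List G)
      (fun l => Finsupp.mapDomain (fun m => l.headD 1 :: m)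
        (Finsupp.single l 1 - Finsupp.single (l.map p) 1 - DD p n (dS l)))

section Aux

variable {G : Type*} [Group G]

lemma list_eraseIdx_map (p : G → G) (l : List G) (k : ℕ) :
    (l.map p).eraseIdx k = (l.eraseIdx k).map p := by
  induction l generalizing k with
  | nil => simp
  | cons a m ih => cases k <;> simp [ih]

lemma DS_single' (l : List G) (b : ℂ) : DS (Finsupp.single l b) = b • dS l := by
  simp [DS, Finsupp.lift_apply, Finsupp.sum_single_index]

lemma DS_single (l : List G) : DS (Finsupp.single l (1 : ℂ)) = dS l := by
  simp [DS, Finsupp.lift_apply, Finsupp.sum_single_index]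

lemma DD0_single (p : G → G) (l : List G) :
    DD p 0 (Finsupp.single l (1 : ℂ)) = Finsupp.single (p (l.headD 1) :: l) 1 := by
  simp [DD, Finsupp.lift_apply, Finsupp.sum_single_index]

lemma DDsucc_single (p : G → G) (n : ℕ) (l : List G) :
    DD p (n + 1) (Finsupp.single l (1 : ℂ)) =
      Finsupp.mapDomain (fun m => l.headD 1 :: m)
        (Finsupp.single l 1 - Finsupp.single (l.map p) 1 - DD p n (dS l)) := by
  simp [DD, Finsupp.lift_apply, Finsupp.sum_single_index]

lemma dS_cons (a : G) (m : List G) :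
    dS (a :: m) = Finsupp.single m 1 -
      Finsupp.mapDomain (fun t => a :: t) (dS m) := by
  rw [dS, List.length_cons, Finset.sum_range_succ']
  simp only [pow_succ, List.eraseIdx_cons_succ, List.eraseIdx_cons_zero, pow_zero, one_smul]
  rw [dS, Finsupp.mapDomain_finset_sum]
  simp only [Finsupp.mapDomain_smul, Finsupp.mapDomain_single]
  rw [add_comm, sub_eq_add_neg, ← Finset.sum_neg_distrib]
  congr 1
  refine Finset.sum_congr rfl fun k _ => ?_
  rw [← neg_smul]; ring_nf

lemma DS_mapDomain_cons (a : G) (c : List G →₀ ℂ) :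
    DS (Finsupp.mapDomain (fun t => a :: t) c) = c - Finsupp.mapDomain (fun t => a :: t) (DS c) := by
  induction c using Finsupp.induction_linear with
  | zero => simp
  | add f g hf hg =>
      rw [Finsupp.mapDomain_add, map_add, hf, hg, map_add, Finsupp.mapDomain_add]; abel
  | single m b =>
      rw [Finsupp.mapDomain_single, DS_single', DS_single', dS_cons, Finsupp.mapDomain_smul,
        smul_sub, Finsupp.smul_single, smul_eq_mul, mul_one]

lemma DS_dS (l : List G) : DS (dS l) = 0 := by
  induction l with
  | nil => simp [dS]
  | cons a m ih =>
      rw [dS_cons, map_sub, DS_single, DS_mapDomain_cons, ih]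
      simp

lemma dS_map (p : G → G) (l : List G) :
    dS (l.map p) = Finsupp.mapDomain (List.map p) (dS l) := by
  rw [dS, dS, Finsupp.mapDomain_finset_sum, List.length_map]
  refine Finset.sum_congr rfl fun k _ => ?_
  rw [Finsupp.mapDomain_smul, Finsupp.mapDomain_single, list_eraseIdx_map]

/-- the correction term -/
noncomputable def Ept {G : Type*} [Group G] (p : G → G) : ℕ → List G → (List G →₀ ℂ)
  | 0, _ => 0
  | (n + 1), l => DD p n (dS l)

lemma main (p : G → G) : ∀ n : ℕ, ∀ l : List G, l.length = n + 1 →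
    Finsupp.single l (1 : ℂ) - Finsupp.single (l.map p) 1
      = Ept p n l + DS (DD p n (Finsupp.single l 1)) := by
  intro n
  induction n with
  | zero =>
      rintro (_ | ⟨g, (_ | _)⟩) hl <;> simp at hl
      rw [DD0_single, DS_single, Ept, zero_add]
      simp only [List.headD_cons]
      rw [dS]
      simp [Finset.sum_range_succ]
      abel
  | succ n ih =>
      intro l hl
      obtain ⟨a, m, rfl⟩ : ∃ a m, l = a :: m := by
        cases l with | nil => simp at hl | cons a m => exact ⟨a, m, rfl⟩
      set l := a :: m with hldef
      have hhead : l.headD 1 = a := rfl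
      rw [DDsucc_single, hhead, DS_mapDomain_cons]
      -- key: DS of the inner chain is zero
      have hind : ∀ k ∈ Finset.range l.length,
          DS (DD p n (Finsupp.single (l.eraseIdx k) (1:ℂ)))
            = Finsupp.single (l.eraseIdx k) (1:ℂ)
              - Finsupp.single ((l.eraseIdx k).map p) 1 - Ept p n (l.eraseIdx k) := by
        intro k hk
        rw [Finset.mem_range] at hk
        have hlen : (l.eraseIdx k).length = n + 1 := by
          rw [List.length_eraseIdx_of_lt hk, hl]
          omega
        rw [ih (l.eraseIdx k) hlen]; abel
      have hS : DS (dS l) = ∑ k ∈ Finset.range l.length, ((-1:ℂ)^k) • dS (l.eraseIdx k) := by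
        conv_lhs => rw [dS]
        rw [map_sum]
        exact Finset.sum_congr rfl fun k _ => by rw [map_smul, DS_single]
      have hkey : DS (Finsupp.single l (1:ℂ) - Finsupp.single (l.map p) 1 - DD p n (dS l)) = 0 := by
        have hDSDD : DS (DD p n (dS l)) = dS l - dS (l.map p) -
            ∑ k ∈ Finset.range l.length, ((-1 : ℂ) ^ k) • Ept p n (l.eraseIdx k) := by
          conv_lhs => rw [dS]
          rw [map_sum, map_sum]
          simp only [map_smul]
          rw [Finset.sum_congr rfl fun k hk => by rw [hind k hk]]
          simp only [smul_sub]
          rw [Finset.sum_sub_distrib, Finset.sum_sub_distrib]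
          congr 1
          congr 1
          simp only [dS, List.length_map, list_eraseIdx_map]
        have hEpt : ∑ k ∈ Finset.range l.length, ((-1 : ℂ) ^ k) • Ept p n (l.eraseIdx k) = 0 := by
          cases n with
          | zero => simp [Ept]
          | succ m =>
              simp only [Ept]
              have h0 : (DD p m) (∑ k ∈ Finset.range l.length, ((-1:ℂ)^k) • dS (l.eraseIdx k)) = 0 := by
                rw [← hS, DS_dS, map_zero]
              rw [map_sum] at h0
              simp only [map_smul] at h0
              exact h0
        rw [map_sub, map_sub, DS_single, DS_single, hDSDD, hEpt]
        abel
      rw [hkey, Finsupp.mapDomain_zero, sub_zero]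
      simp only [Ept]
      abel

end Aux

/-- for `p = p_h` built from a section `s` of `Z_h\G`, the maps `D_n`
satisfy `(id − i^E p^E)(g_0) = ∂_1 D_0 (g_0)` on `E_0(G)` and
`id − i^E p^E = D_{n−1} ∂_n + ∂_{n+1} D_n` on `E_n(G)` for `n ≥ 1`. -/
theorem statement12 {G : Type*} [Group G] (h : G) (s : G → G)
    (hcoset : ∀ g : G, (g * (s g)⁻¹) * h = h * (g * (s g)⁻¹))
    (hconst : ∀ g₁ g₂ : G, (g₁ * g₂⁻¹) * h = h * (g₁ * g₂⁻¹) → s g₁ = s g₂) :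
    (∀ g : G,
      Finsupp.single [g] (1 : ℂ) - Finsupp.single [g * (s g)⁻¹] 1
        = DS (DD (fun g => g * (s g)⁻¹) 0 (Finsupp.single [g] 1))) ∧
    (∀ (n : ℕ) (l : List G), l.length = n + 2 →
      Finsupp.single l (1 : ℂ) - Finsupp.single (l.map (fun g => g * (s g)⁻¹)) 1
        = DD (fun g => g * (s g)⁻¹) n (dS l)
          + DS (DD (fun g => g * (s g)⁻¹) (n + 1) (Finsupp.single l 1))) := by
  constructor
  · intro g
    have := main (fun g => g * (s g)⁻¹) 0 [g] rfl
    simpa [Ept] using this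
  · intro n l hl
    have := main (fun g => g * (s g)⁻¹) (n + 1) l hl
    simpa [Ept] using this
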